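/- arXiv:2003.06121 — 4 statements merged into one kernel-verified Lean document; each statement's English description precedes it below -/
import Mathlib

section
/- Let X be a totally bounded metric space and let D be an r-separated distribution over X × {−1,+1}. Let (k_n) be any sequence of positive integers with lim_{n→∞} k_n/n = 0, and let M be the k_n-nearest-neighbor classification algorithm. Then M is r-consistent with respect to D. -/
open MeasureTheory Metric Filter Finset
open scoped Classical ENNReal

noncomputable section

namespace RobustNP

variable {X : Type*} [MetricSpace X] [MeasurableSpace X]

/-- The sign of a boolean label: `true ↦ +1`, `false ↦ -1`.  We encode the label
space `{-1, +1}` by `Bool`, with `true` standing for `+1` and `false` for `-1`. -/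
def sgn (y : Bool) : ℝ := if y then 1 else -1

/-- A classifier `f : X → Bool` is astute at the labeled point `p = (x, y)` with radius `r`
if `f x' = y` for every `x'` in the closed ball of radius `r` around `x`. -/
def Astute (f : X → Bool) (r : ℝ) (p : X × Bool) : Prop :=
  ∀ x' ∈ closedBall p.1 r, f x' = p.2

/-- The astuteness `A_r(f, D)` of a classifier `f` over a distribution `D`:
the probability that `f` is astute at `(x, y) ~ D` with radius `r`. -/
def astuteness (D : Measure (X × Bool)) (f : X → Bool) (r : ℝ) : ℝ :=
  (D {p | Astute f r p}).toReal

/-- The optimal astuteness `A_r^*(D) = sup_f A_r(f, D)`. -/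
def optAstuteness (D : Measure (X × Bool)) (r : ℝ) : ℝ :=
  ⨆ f : X → Bool, astuteness D f r

/-- A distribution `D` over `X × {-1,+1}` is `r`-separated if there are sets
`T⁺, T⁻ ⊆ X` such that almost surely `x ∈ T^y`, and any two points of `T⁺` and `T⁻`
are at distance `> 2r`. -/
def RSeparated (D : Measure (X × Bool)) (r : ℝ) : Prop :=
  ∃ Tp Tm : Set X,
    D {p | p.1 ∈ (if p.2 then Tp else Tm)} = 1 ∧
    ∀ x₁ ∈ Tp, ∀ x₂ ∈ Tm, 2 * r < dist x₁ x₂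

/-- The distribution `D^n` of an i.i.d. sample of size `n` drawn from `D`. -/
def samples (D : Measure (X × Bool)) (n : ℕ) : Measure (Fin n → X × Bool) :=
  Measure.pi fun _ => D

/-- An algorithm `M` (mapping a labeled sample of each size `n` to a classifier) is
`r`-consistent with respect to `D` if for all `ε, δ ∈ (0,1)` and `0 < γ < r` there is `N`
such that for all `n ≥ N`, with probability at least `1 - δ` over `S ~ D^n`,
`A_{r-γ}(M(S), D) ≥ A_r^*(D) - ε`. -/
def RConsistent (M : ∀ n : ℕ, (Fin n → X × Bool) → X → Bool)
    (D : Measure (X × Bool)) (r : ℝ) : Prop :=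
  ∀ ε ∈ Set.Ioo (0 : ℝ) 1, ∀ δ ∈ Set.Ioo (0 : ℝ) 1, ∀ γ ∈ Set.Ioo (0 : ℝ) r,
    ∃ N : ℕ, ∀ n ≥ N,
      1 - δ ≤ (samples D n {s | optAstuteness D r - ε ≤ astuteness D (M n s) (r - γ)}).toReal

/-- A weight function: for each sample size `n` and each tuple of (unlabeled) sample points,
weights `w i x ∈ [0,1]` summing to one (for `n > 0`); the weights depend only on the sample
points, not the labels. -/
structure WeightFunction (X : Type*) where
  w : ∀ n : ℕ, (Fin n → X) → Fin n → X → ℝ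
  nonneg : ∀ n xs i x, 0 ≤ w n xs i x
  le_one : ∀ n xs i x, w n xs i x ≤ 1
  sum_eq_one : ∀ n : ℕ, 0 < n → ∀ xs x, ∑ i, w n xs i x = 1

/-- The classifier produced by a weight function on a labeled sample `s`:
output `+1` (i.e. `true`) iff `∑ i, w_i(x) * y_i > 0`. -/
def WeightFunction.classify (W : WeightFunction X) {n : ℕ}
    (s : Fin n → X × Bool) (x : X) : Bool :=
  if 0 < ∑ i, W.w n (fun j => (s j).1) i x * sgn (s i).2 then true else false

/-- The rank of sample point `i` with respect to query point `x`: the number of sample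
points strictly closer to `x` than `x_i` (ties broken by index).  Point `i` is among the
`k` nearest neighbors of `x` iff its rank is `< k`. -/
def knnRank {n : ℕ} (xs : Fin n → X) (x : X) (i : Fin n) : ℕ :=
  (univ.filter fun j => dist (xs j) x < dist (xs i) x ∨
    (dist (xs j) x = dist (xs i) x ∧ j < i)).card

/-- The `k`-nearest-neighbor classifier on the labeled sample `s`:
majority vote among the `k` nearest sample points (equivalently, the weight-function
classifier with weights `1/k` on the `k` nearest neighbors and `0` elsewhere). -/
def knnClassify (k : ℕ) {n : ℕ} (s : Fin n → X × Bool) (x : X) : Bool :=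
  if 0 < ∑ i ∈ univ.filter (fun i => knnRank (fun j => (s j).1) x i < k), sgn (s i).2
  then true else false

/-- The kernel classifier built from kernel `K` with bandwidth `h` on the labeled sample `s`:
the weight-function classifier with weights `w_i(x) = K(d(x,x_i)/h) / ∑_j K(d(x,x_j)/h)`. -/
def kernelClassify (K : ℝ → ℝ) (h : ℝ) {n : ℕ} (s : Fin n → X × Bool) (x : X) : Bool :=
  if 0 < ∑ i, (K (dist x (s i).1 / h) / ∑ j, K (dist x (s j).1 / h)) * sgn (s i).2
  then true else false

/-- A subset `T` of the index set of a labeled sample `s` is `r`-separated if any two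
sample points indexed by `T` carrying different labels are at distance `> 2r`. -/
def IndexSeparated (r : ℝ) {n : ℕ} (s : Fin n → X × Bool) (T : Finset (Fin n)) : Prop :=
  ∀ i ∈ T, ∀ j ∈ T, (s i).2 ≠ (s j).2 → 2 * r < dist (s i).1 (s j).1

/-- The sub-sample of `s` indexed by the finite index set `T`, re-indexed by `Fin T.card`. -/
def subSample {n : ℕ} (s : Fin n → X × Bool) (T : Finset (Fin n)) :
    Fin T.card → X × Bool :=
  fun i => s (T.orderIsoOfFin rfl i).val

/-- A finite set of labeled points is `r`-separated if oppositely labeled points are at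
distance `> 2r`. -/
def FinsetSeparated (r : ℝ) (S : Finset (X × Bool)) : Prop :=
  ∀ p ∈ S, ∀ q ∈ S, p.2 ≠ q.2 → 2 * r < dist p.1 q.1


section AuxLemmas

lemma exists_knnRank_eq_zero {n : ℕ} (hn : 0 < n) (xs : Fin n → X) (x : X) :
    ∃ i, knnRank xs x i = 0 := by
  haveI : Nonempty (Fin n) := Fin.pos_iff_nonempty.mp hn
  obtain ⟨i₁, -, hi₁⟩ := Finset.exists_min_image (univ : Finset (Fin n))
    (fun j => dist (xs j) x) univ_nonempty
  set A : Finset (Fin n) := univ.filter fun j => dist (xs j) x = dist (xs i₁) x with hA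
  have hi₁A : i₁ ∈ A := by simp [hA]
  have hAne : A.Nonempty := ⟨i₁, hi₁A⟩
  refine ⟨A.min' hAne, ?_⟩
  have hmem := A.min'_mem hAne
  have hdist : dist (xs (A.min' hAne)) x = dist (xs i₁) x := by
    simpa [hA] using hmem
  rw [knnRank, Finset.card_eq_zero, Finset.filter_eq_empty_iff]
  intro j _
  push_neg
  constructor
  · rw [hdist]; exact hi₁ j (mem_univ j)
  · intro hj
    have hjA : j ∈ A := by simp only [hA, mem_filter, mem_univ, true_and]; exact hj.trans hdist
    exact A.min'_le j hjA

lemma dist_le_of_knnRank_lt {n k : ℕ} {xs : Fin n → X} {x : X} {R : ℝ}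
    (hcard : k ≤ (univ.filter fun j => dist (xs j) x ≤ R).card)
    {i : Fin n} (hi : knnRank xs x i < k) : dist (xs i) x ≤ R := by
  by_contra h
  push_neg at h
  have hsub : (univ.filter fun j => dist (xs j) x ≤ R) ⊆
      (univ.filter fun j => dist (xs j) x < dist (xs i) x ∨
        (dist (xs j) x = dist (xs i) x ∧ j < i)) := by
    intro j hj
    simp only [mem_filter, mem_univ, true_and] at hj ⊢
    exact Or.inl (lt_of_le_of_lt hj h)
  have := Finset.card_le_card hsub
  rw [knnRank] at hi
  omega

lemma knnClassify_eq {n k : ℕ} (hn : 0 < n) (hk : 0 < k) (s : Fin n → X × Bool) (x : X) (b : Bool)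
    (hlab : ∀ i, knnRank (fun j => (s j).1) x i < k → (s i).2 = b) :
    knnClassify k s x = b := by
  set T := univ.filter (fun i => knnRank (fun j => (s j).1) x i < k) with hT
  have hTne : T.Nonempty := by
    obtain ⟨i, hi⟩ := exists_knnRank_eq_zero hn (fun j => (s j).1) x
    exact ⟨i, by simp [hT, hi, hk]⟩
  have hsum : ∑ i ∈ T, sgn (s i).2 = T.card * sgn b := by
    rw [Finset.sum_congr rfl fun i hi => ?_, Finset.sum_const, nsmul_eq_mul]
    have : (s i).2 = b := hlab i (by simpa [hT] using hi)
    rw [this]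
  have hcardpos : (0:ℝ) < T.card := by
    exact_mod_cast Finset.card_pos.mpr hTne
  cases b
  · rw [knnClassify, if_neg]; rw [hsum]
    have : sgn false = -1 := by simp [sgn]
    rw [this]; push_neg; nlinarith
  · rw [knnClassify, if_pos]; rw [hsum]
    have : sgn true = 1 := by simp [sgn]
    rw [this]; nlinarith

lemma measure_le_inter {Ω : Type*} [MeasurableSpace Ω] (μ : Measure Ω) [IsProbabilityMeasure μ]
    {G A : Set Ω} (hG : μ G = 1) (hA : MeasurableSet A) : μ A ≤ μ (G ∩ A) := by
  have h : μ (G ∩ A) + μ (G \ A) = 1 := by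
    rw [measure_inter_add_diff (μ := μ) G hA, hG]
  have h2 : μ (G \ A) ≤ μ Aᶜ := measure_mono fun x hx => hx.2
  have hAc : μ Aᶜ = 1 - μ A := by
    rw [measure_compl hA (measure_ne_top μ A), measure_univ]
  have e1 : μ (G ∩ A) = 1 - μ (G \ A) :=
    ENNReal.eq_sub_of_add_eq (measure_ne_top μ _) h
  calc μ A = 1 - μ Aᶜ := by rw [hAc, ENNReal.sub_sub_cancel ENNReal.one_ne_top prob_le_one]
    _ ≤ 1 - μ (G \ A) := tsub_le_tsub_left h2 1
    _ = μ (G ∩ A) := e1.symm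

lemma pi_eval_preimage {ι : Type*} [Fintype ι] {Ω : Type*} [MeasurableSpace Ω]
    (μ : Measure Ω) [IsProbabilityMeasure μ] (i : ι) {A : Set Ω} (_hA : MeasurableSet A) :
    Measure.pi (fun _ : ι => μ) ((fun s => s i) ⁻¹' A) = μ A := by
  have hset : ((fun s : ι → Ω => s i) ⁻¹' A) =
      Set.pi Set.univ (Function.update (fun _ : ι => (Set.univ : Set Ω)) i A) := by
    ext s
    simp only [Set.mem_preimage, Set.mem_pi, Set.mem_univ, true_implies]
    constructor
    · intro hs j
      rcases eq_or_ne j i with rfl | hj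
      · simpa using hs
      · simp [Function.update_of_ne hj]
    · intro hs
      simpa using hs i
  rw [hset, Measure.pi_pi]
  rw [Finset.prod_eq_single i (fun j _ hj => by simp [Function.update_of_ne hj])
    (fun h => absurd (Finset.mem_univ i) h)]
  simp

lemma iIndepFun_eval {ι : Type*} [Fintype ι] {Ω : Type*} [MeasurableSpace Ω]
    (μ : Measure Ω) [IsProbabilityMeasure μ] :
    ProbabilityTheory.iIndepFun
      (fun (i : ι) (s : ι → Ω) => s i) (Measure.pi fun _ => μ) := by
  rw [ProbabilityTheory.iIndepFun_iff_measure_inter_preimage_eq_mul]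
  intro S sets hsets
  have hset : (⋂ i ∈ S, (fun s : ι → Ω => s i) ⁻¹' sets i) =
      Set.pi Set.univ (fun i => if i ∈ S then sets i else Set.univ) := by
    ext s
    simp only [Set.mem_iInter, Set.mem_preimage, Set.mem_pi, Set.mem_univ, true_implies]
    constructor
    · intro hs j
      by_cases hj : j ∈ S <;> simp [hj, hs j]
    · intro hs j hj
      have := hs j
      rwa [if_pos hj] at this
  rw [hset, Measure.pi_pi]
  have : ∀ i, μ (if i ∈ S then sets i else Set.univ) = if i ∈ S then μ (sets i) else 1 := by
    intro i; split <;> simp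
  simp_rw [this]
  rw [Finset.prod_ite_mem, Finset.univ_inter]
  refine Finset.prod_congr rfl fun i hi => ?_
  rw [pi_eval_preimage μ i (hsets i hi)]

open ProbabilityTheory in
lemma count_lt_bound {Ω : Type*} [MeasurableSpace Ω] (μ : Measure Ω) [IsProbabilityMeasure μ]
    {A : Set Ω} (hA : MeasurableSet A) {a : ℝ} (ha : 0 < a) (haA : ENNReal.ofReal a ≤ μ A)
    {n k : ℕ} (hn : 0 < n) (hk : (k : ℝ) ≤ n * a / 2) :
    (Measure.pi fun _ : Fin n => μ)
      {s | ((univ : Finset (Fin n)).filter fun j => s j ∈ A).card < k}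
      ≤ ENNReal.ofReal (4 / (n * a ^ 2)) := by
  set π : Measure (Fin n → Ω) := Measure.pi fun _ => μ with hπ
  haveI : IsProbabilityMeasure π := by rw [hπ]; infer_instance
  set q := (μ A).toReal with hqdef
  have hq1 : q ≤ 1 := by
    have h := ENNReal.toReal_mono ENNReal.one_ne_top (prob_le_one (μ := μ) (s := A))
    simpa using h
  have hqa : a ≤ q := by
    have h := ENNReal.toReal_mono (measure_ne_top μ A) haA
    rwa [ENNReal.toReal_ofReal ha.le] at h
  have hnpos : (0:ℝ) < n := Nat.cast_pos.mpr hn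
  set ξ : Fin n → (Fin n → Ω) → ℝ :=
    fun i => ((fun s : Fin n → Ω => s i) ⁻¹' A).indicator (fun _ => (1:ℝ)) with hξ
  have hmeaspre : ∀ i : Fin n, MeasurableSet ((fun s : Fin n → Ω => s i) ⁻¹' A) :=
    fun i => (measurable_pi_apply i) hA
  have hmem : ∀ i, MemLp (ξ i) 2 π :=
    fun i => memLp_indicator_const 2 (hmeaspre i) 1 (Or.inr (measure_ne_top _ _))
  have hintξ : ∀ i, π[ξ i] = q := by
    intro i
    rw [hξ]
    rw [integral_indicator_const (1:ℝ) (hmeaspre i)]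
    rw [hπ, measureReal_def, pi_eval_preimage μ i hA, smul_eq_mul, mul_one]
  have hEN : π[∑ i, ξ i] = n * q := by
    simp only [Finset.sum_apply]
    rw [integral_finset_sum univ (fun i _ => (hmem i).integrable one_le_two)]
    simp [hintξ]
  have hsq : ∀ i, (ξ i) ^ 2 = ξ i := by
    intro i
    funext s
    simp only [Pi.pow_apply, hξ, Set.indicator_apply]
    split <;> norm_num
  have hvarξ : ∀ i, variance (ξ i) π ≤ 1 := by
    intro i
    have h := variance_le_expectation_sq (μ := π) (X := ξ i) (hmem i).aestronglyMeasurable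
    rw [hsq i, hintξ i] at h
    exact h.trans hq1
  have hindep : Set.Pairwise ↑(univ : Finset (Fin n))
      (fun i j => IndepFun (ξ i) (ξ j) π) := by
    have hcomp := (iIndepFun_eval (ι := Fin n) μ).comp
      (fun _ => A.indicator (fun _ => (1:ℝ)))
      (fun _ => measurable_const.indicator hA)
    intro i _ j _ hij
    exact hcomp.indepFun hij
  have hvarN : variance (∑ i, ξ i) π ≤ n := by
    rw [IndepFun.variance_sum (fun i _ => hmem i) hindep]
    calc ∑ i : Fin n, variance (ξ i) π ≤ ∑ _i : Fin n, (1:ℝ) :=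
          Finset.sum_le_sum fun i _ => hvarξ i
      _ = n := by simp
  have hcpos : (0:ℝ) < n * a / 2 := by positivity
  have hsubset : {s : Fin n → Ω | ((univ : Finset (Fin n)).filter fun j => s j ∈ A).card < k}
      ⊆ {s | n * a / 2 ≤ |(∑ i, ξ i) s - π[∑ i, ξ i]|} := by
    intro s hs
    simp only [Set.mem_setOf_eq] at hs ⊢
    have hNs : (∑ i, ξ i) s
        = (((univ : Finset (Fin n)).filter fun j => s j ∈ A).card : ℝ) := by
      rw [Finset.sum_apply]
      simp only [hξ, Set.indicator_apply, Set.mem_preimage]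
      rw [Finset.sum_boole]
    have hcard : ((((univ : Finset (Fin n)).filter fun j => s j ∈ A).card : ℝ)) < (k:ℝ) :=
      Nat.cast_lt.mpr hs
    have hqn : n * a ≤ n * q := by nlinarith
    rw [hEN, hNs]
    rw [le_abs]
    right
    nlinarith
  calc π {s : Fin n → Ω | ((univ : Finset (Fin n)).filter fun j => s j ∈ A).card < k}
      ≤ π {s | n * a / 2 ≤ |(∑ i, ξ i) s - π[∑ i, ξ i]|} := measure_mono hsubset
    _ ≤ ENNReal.ofReal (variance (∑ i, ξ i) π / (n * a / 2) ^ 2) :=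
        meas_ge_le_variance_div_sq (memLp_finset_sum' _ (fun i _ => hmem i)) hcpos
    _ ≤ ENNReal.ofReal (4 / (n * a ^ 2)) := by
        apply ENNReal.ofReal_le_ofReal
        have h1 : variance (∑ i, ξ i) π / (n * a / 2) ^ 2 ≤ (n:ℝ) / (n * a / 2) ^ 2 := by
          gcongr
        have h2 : (n:ℝ) / (n * a / 2) ^ 2 = 4 / (n * a ^ 2) := by
          field_simp
          ring
        linarith

end AuxLemmas

set_option maxHeartbeats 1000000 in
/-- Corollary 1 of the paper.  Let `X` be a totally bounded metric space
and `D` an `r`-separated distribution over `X × {-1,+1}`.  If `(k_n)` is any sequence of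
positive integers with `k_n / n → 0`, then the `k_n`-nearest-neighbor classification
algorithm is `r`-consistent with respect to `D`. -/
theorem knn_rConsistent_of_rSeparated
    {X : Type*} [MetricSpace X] [MeasurableSpace X] [BorelSpace X]
    (hX : TotallyBounded (Set.univ : Set X))
    (D : Measure (X × Bool)) (hD : IsProbabilityMeasure D)
    (r : ℝ) (hsep : RSeparated D r)
    (k : ℕ → ℕ) (hkpos : ∀ n, 0 < k n)
    (hk : Tendsto (fun n : ℕ => (k n : ℝ) / n) atTop (nhds 0)) :
    RConsistent (fun n s => knnClassify (k n) s) D r := by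
  classical
  haveI := hD
  obtain ⟨Tp, Tm, hTfull, hTsep⟩ := hsep
  intro ε hε δ hδ γ hγ
  obtain ⟨hε0, hε1⟩ := hε
  obtain ⟨hδ0, hδ1⟩ := hδ
  obtain ⟨hγ0, hγr⟩ := hγ
  have hr : 0 < r := hγ0.trans hγr
  -- the optimal astuteness is at most 1
  have hopt : optAstuteness D r ≤ 1 := by
    apply ciSup_le
    intro f
    have h1 : D {p | Astute f r p} ≤ 1 := prob_le_one
    have h2 := ENNReal.toReal_mono ENNReal.one_ne_top h1
    simpa [astuteness] using h2
  -- a finite cover by balls of radius γ/2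
  obtain ⟨t0, ht0fin, ht0cov⟩ := totallyBounded_iff.mp hX (γ/2) (by positivity)
  set C : Finset X := ht0fin.toFinset with hC
  set L : ℕ := C.card with hL
  set η : ℝ := ε / (L + 1) with hη
  have hηpos : 0 < η := by positivity
  set Ac : X → Set (X × Bool) := fun c => Prod.fst ⁻¹' Metric.ball c (γ/2) with hAc
  have hAcm : ∀ c, MeasurableSet (Ac c) :=
    fun c => (isOpen_ball.measurableSet).preimage measurable_fst
  set heavy : Finset X := C.filter (fun c => ENNReal.ofReal η ≤ D (Ac c)) with hheavy
  -- the "good label" sets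
  set Pstar : Set X := (⋃ w ∈ Tm, Metric.ball w (2*r - γ/2))ᶜ with hPstar
  set Mstar : Set X := (⋃ w ∈ Tp, Metric.ball w (2*r - γ/2))ᶜ with hMstar
  have hPstarm : MeasurableSet Pstar :=
    (isOpen_biUnion fun _ _ => isOpen_ball).measurableSet.compl
  have hMstarm : MeasurableSet Mstar :=
    (isOpen_biUnion fun _ _ => isOpen_ball).measurableSet.compl
  set Ghat : Set (X × Bool) := (Pstar ×ˢ {true}) ∪ (Mstar ×ˢ {false}) with hGhat
  have hGhatm : MeasurableSet Ghat :=
    ((hPstarm.prod (MeasurableSet.of_discrete))).union (hMstarm.prod (MeasurableSet.of_discrete))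
  set G : Set (X × Bool) := {p | p.1 ∈ (if p.2 then Tp else Tm)} with hG
  clear_value G
  have hGsub : G ⊆ Ghat := by
    rintro ⟨x, y⟩ hp
    rw [hG] at hp
    cases y
    · -- x ∈ Tm
      have hx : x ∈ Tm := by simpa [hG] using hp
      right
      refine ⟨?_, rfl⟩
      simp only [hMstar, Set.mem_compl_iff]
      intro hmem
      rw [Set.mem_iUnion₂] at hmem
      obtain ⟨w, hw, hball⟩ := hmem
      have hsep2 := hTsep w hw x hx
      rw [Metric.mem_ball] at hball
      rw [dist_comm] at hball
      linarith
    · -- x ∈ Tp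
      have hx : x ∈ Tp := by simpa [hG] using hp
      left
      refine ⟨?_, rfl⟩
      simp only [hPstar, Set.mem_compl_iff]
      intro hmem
      rw [Set.mem_iUnion₂] at hmem
      obtain ⟨w, hw, hball⟩ := hmem
      have hsep2 := hTsep x hx w hw
      rw [Metric.mem_ball] at hball
      linarith
  have hGhat1 : D Ghat = 1 := le_antisymm prob_le_one (hTfull ▸ measure_mono hGsub)
  have hGhatc : D Ghatᶜ = 0 := by
    rw [measure_compl hGhatm (measure_ne_top _ _), hGhat1, measure_univ, tsub_self]
  clear_value C L η Ac heavy Pstar Mstar Ghat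
  -- key geometric facts
  have hKP : ∀ z ∈ Pstar, ∀ w ∈ Tm, 2*r - γ/2 ≤ dist z w := by
    intro z hz w hw
    rw [hPstar] at hz
    by_contra h
    push_neg at h
    exact hz (Set.mem_biUnion hw (Metric.mem_ball.mpr h))
  have hKM : ∀ z ∈ Mstar, ∀ w ∈ Tp, 2*r - γ/2 ≤ dist z w := by
    intro z hz w hw
    rw [hMstar] at hz
    by_contra h
    push_neg at h
    exact hz (Set.mem_biUnion hw (Metric.mem_ball.mpr h))
  -- choose N
  have hev1 : ∀ᶠ n : ℕ in atTop, (k n : ℝ) / n < η / 2 :=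
    Filter.Tendsto.eventually_lt_const (by positivity) hk
  obtain ⟨N₁, hN₁⟩ := Filter.eventually_atTop.mp hev1
  set N₂ : ℕ := ⌈8 * ((L:ℝ)+1) / (δ * η^2)⌉₊ + 1 with hN₂def
  clear_value N₂
  set N : ℕ := max N₁ (max 1 N₂) with hN
  refine ⟨N, fun n hn => ?_⟩
  have hn1 : 1 ≤ n := le_trans (le_trans (le_max_left 1 N₂) (le_max_right N₁ _)) hn
  have hnN₁ : N₁ ≤ n := le_trans (le_max_left _ _) hn
  have hnN₂ : N₂ ≤ n := le_trans (le_trans (le_max_right 1 N₂) (le_max_right N₁ _)) hn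
  have hn0 : 0 < n := hn1
  have hnpos : (0:ℝ) < n := Nat.cast_pos.mpr hn0
  haveI : IsProbabilityMeasure (samples D n) := by
    unfold samples; infer_instance
  have hkn : (k n : ℝ) ≤ n * η / 2 := by
    have h := hN₁ n hnN₁
    rw [div_lt_iff₀ hnpos] at h
    nlinarith
  have hbnd : 4 / ((n:ℝ) * η^2) ≤ δ / ((L:ℝ)+1) := by
    have h8 : 8 * ((L:ℝ)+1) / (δ * η^2) ≤ n := by
      have hceil : (8 * ((L:ℝ)+1) / (δ * η^2)) ≤ (⌈8 * ((L:ℝ)+1) / (δ * η^2)⌉₊ : ℝ) :=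
        Nat.le_ceil _
      have : (N₂ : ℝ) ≤ n := Nat.cast_le.mpr hnN₂
      have hc : ((⌈8 * ((L:ℝ)+1) / (δ * η^2)⌉₊ : ℕ) : ℝ) + 1 = (N₂ : ℝ) := by
        rw [hN₂def]; push_cast; ring
      linarith
    have hd1 : (0:ℝ) < (n:ℝ) * η^2 := mul_pos hnpos (pow_pos hηpos 2)
    have hd2 : (0:ℝ) < (L:ℝ) + 1 := by positivity
    rw [div_le_div_iff₀ hd1 hd2]
    have h9 : 8 * ((L:ℝ)+1) ≤ n * (δ * η^2) := by
      rw [div_le_iff₀ (mul_pos hδ0 (pow_pos hηpos 2))] at h8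
      linarith
    nlinarith
  -- the concentration bound for each heavy center
  have hconc : ∀ c ∈ heavy,
      samples D n {s : Fin n → X × Bool |
        ((univ : Finset (Fin n)).filter fun j => s j ∈ Ac c).card < k n}
        ≤ ENNReal.ofReal (δ / ((L:ℝ)+1)) := by
    intro c hc
    rw [hheavy] at hc
    have hheavyc : ENNReal.ofReal η ≤ D (Ac c) := (Finset.mem_filter.mp hc).2
    calc samples D n {s : Fin n → X × Bool |
        ((univ : Finset (Fin n)).filter fun j => s j ∈ Ac c).card < k n}
        ≤ ENNReal.ofReal (4 / (n * η^2)) :=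
          count_lt_bound D (hAcm c) hηpos hheavyc hn0 hkn
      _ ≤ ENNReal.ofReal (δ / ((L:ℝ)+1)) := ENNReal.ofReal_le_ofReal hbnd
  -- the good event
  set Ev : Set (Fin n → X × Bool) :=
    {s | (∀ c ∈ heavy, k n ≤ ((univ : Finset (Fin n)).filter fun j => s j ∈ Ac c).card) ∧
      ∀ j, s j ∈ Ghat} with hEv
  clear_value Ev
  have hEvc : samples D n Evᶜ ≤ ENNReal.ofReal δ := by
    have hsub : Evᶜ ⊆ (⋃ c ∈ heavy, {s : Fin n → X × Bool |
          ((univ : Finset (Fin n)).filter fun j => s j ∈ Ac c).card < k n})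
        ∪ (⋃ j : Fin n, (fun s : Fin n → X × Bool => s j) ⁻¹' Ghatᶜ) := by
      intro s hs
      simp only [hEv, Set.mem_compl_iff, Set.mem_setOf_eq, not_and_or] at hs
      rcases hs with hs | hs
      · left
        push_neg at hs
        obtain ⟨c, hc, hlt⟩ := hs
        exact Set.mem_biUnion hc (by simpa using hlt)
      · right
        push_neg at hs
        obtain ⟨j, hj⟩ := hs
        exact Set.mem_iUnion.mpr ⟨j, hj⟩
    have hnull : samples D n (⋃ j : Fin n, (fun s : Fin n → X × Bool => s j) ⁻¹' Ghatᶜ) = 0 :=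
      measure_iUnion_null fun j => Measure.pi_eval_preimage_null _ hGhatc
    calc samples D n Evᶜ
        ≤ samples D n ((⋃ c ∈ heavy, {s : Fin n → X × Bool |
            ((univ : Finset (Fin n)).filter fun j => s j ∈ Ac c).card < k n})
          ∪ (⋃ j : Fin n, (fun s : Fin n → X × Bool => s j) ⁻¹' Ghatᶜ)) := measure_mono hsub
      _ ≤ samples D n (⋃ c ∈ heavy, {s : Fin n → X × Bool |
            ((univ : Finset (Fin n)).filter fun j => s j ∈ Ac c).card < k n})
          + samples D n (⋃ j : Fin n, (fun s : Fin n → X × Bool => s j) ⁻¹' Ghatᶜ) :=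
            measure_union_le _ _
      _ = samples D n (⋃ c ∈ heavy, {s : Fin n → X × Bool |
            ((univ : Finset (Fin n)).filter fun j => s j ∈ Ac c).card < k n}) := by
            rw [hnull, add_zero]
      _ ≤ ∑ c ∈ heavy, samples D n {s : Fin n → X × Bool |
            ((univ : Finset (Fin n)).filter fun j => s j ∈ Ac c).card < k n} :=
            measure_biUnion_finset_le _ _
      _ ≤ ∑ _c ∈ heavy, ENNReal.ofReal (δ / ((L:ℝ)+1)) := Finset.sum_le_sum hconc
      _ = (heavy.card : ℝ≥0∞) * ENNReal.ofReal (δ / ((L:ℝ)+1)) := by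
            rw [Finset.sum_const, nsmul_eq_mul]
      _ ≤ ENNReal.ofReal δ := by
            rw [← ENNReal.ofReal_natCast, ← ENNReal.ofReal_mul (by positivity)]
            apply ENNReal.ofReal_le_ofReal
            have hcard : ((heavy.card : ℕ) : ℝ) ≤ (L:ℝ) := by
              have := Finset.card_le_card (show heavy ⊆ C by rw [hheavy]; exact Finset.filter_subset _ _)
              rw [hL]
              exact_mod_cast this
            have hδL : ((L:ℝ)+1) * (δ / ((L:ℝ)+1)) = δ := by field_simp
            nlinarith [div_nonneg hδ0.le (by positivity : (0:ℝ) ≤ (L:ℝ)+1)]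
  have hEvlb : ENNReal.ofReal (1 - δ) ≤ samples D n Ev := by
    have hunion : (1:ℝ≥0∞) ≤ samples D n Ev + samples D n Evᶜ := by
      calc (1:ℝ≥0∞) = samples D n Set.univ := measure_univ.symm
        _ = samples D n (Ev ∪ Evᶜ) := by rw [Set.union_compl_self]
        _ ≤ _ := measure_union_le _ _
    have h1 : (1:ℝ≥0∞) ≤ samples D n Ev + ENNReal.ofReal δ :=
      le_trans hunion (add_le_add le_rfl hEvc)
    have h2 : ENNReal.ofReal (1-δ) + ENNReal.ofReal δ = 1 := by
      rw [← ENNReal.ofReal_add (by linarith) hδ0.le]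
      norm_num
    have h3 : ENNReal.ofReal (1-δ) = 1 - ENNReal.ofReal δ :=
      ENNReal.eq_sub_of_add_eq ENNReal.ofReal_ne_top h2
    exact le_trans h3.le (tsub_le_iff_right.mpr h1)
  -- the deterministic claim: on the good event, astuteness is at least 1 - ε
  have hdet : Ev ⊆ {s : Fin n → X × Bool |
      optAstuteness D r - ε ≤ astuteness D (knnClassify (k n) s) (r - γ)} := by
    intro s hs
    rw [hEv] at hs
    obtain ⟨hs1, hs2⟩ := hs
    simp only [Set.mem_setOf_eq]
    set W : Set (X × Bool) := Prod.fst ⁻¹' (⋃ c ∈ heavy, Metric.ball c (γ/2)) with hW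
    clear_value W
    have hWm : MeasurableSet W := by
      rw [hW]
      exact ((isOpen_biUnion fun _ _ => isOpen_ball).measurableSet).preimage measurable_fst
    have hGW : G ∩ W ⊆ {p | Astute (knnClassify (k n) s) (r-γ) p} := by
      rintro ⟨x, y⟩ ⟨hxG, hxW⟩
      rw [hW, Set.mem_preimage, Set.mem_iUnion₂] at hxW
      obtain ⟨c, hc, hxc⟩ := hxW
      intro x' hx'
      rw [Metric.mem_closedBall] at hx'
      set xs : Fin n → X := fun j => (s j).1 with hxs
      have hcount : k n ≤ ((univ : Finset (Fin n)).filter fun j => s j ∈ Ac c).card := hs1 c hc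
      have hcard : k n ≤ ((univ : Finset (Fin n)).filter fun j => dist (xs j) x' ≤ r).card := by
        refine le_trans hcount (Finset.card_le_card ?_)
        intro j hj
        simp only [Finset.mem_filter, Finset.mem_univ, true_and] at hj ⊢
        have hjc : dist (xs j) c < γ/2 := by
          simpa [hAc, Metric.mem_ball] using hj
        have hxcd : dist x c < γ/2 := Metric.mem_ball.mp hxc
        have h1 : dist (xs j) x < γ := by
          calc dist (xs j) x ≤ dist (xs j) c + dist c x := dist_triangle _ _ _
            _ = dist (xs j) c + dist x c := by rw [dist_comm c x]
            _ < γ := by linarith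
        calc dist (xs j) x' ≤ dist (xs j) x + dist x x' := dist_triangle _ _ _
          _ = dist (xs j) x + dist x' x := by rw [dist_comm x x']
          _ ≤ r := by linarith
      cases y with
      | true =>
        have hxTp : x ∈ Tp := by simpa [hG] using hxG
        have hlab : ∀ i, knnRank xs x' i < k n → (s i).2 = true := by
          intro i hi
          have hdi : dist (xs i) x' ≤ r := dist_le_of_knnRank_lt hcard hi
          by_contra hfalse
          have hb : (s i).2 = false := Bool.not_eq_true _ ▸ (by simpa using hfalse)
          have hmem := hs2 i
          rw [hGhat] at hmem
          rcases hmem with h | h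
          · rw [Set.mem_prod] at h
            simp [hb] at h
          · rw [Set.mem_prod] at h
            have hzM : (s i).1 ∈ Mstar := h.1
            have hfar := hKM (s i).1 hzM x hxTp
            have hd2 : dist (xs i) x ≤ dist (xs i) x' + dist x' x := dist_triangle _ _ _
            have : dist (xs i) x = dist (s i).1 x := rfl
            linarith
        exact knnClassify_eq hn0 (hkpos n) s x' true hlab
      | false =>
        have hxTm : x ∈ Tm := by simpa [hG] using hxG
        have hlab : ∀ i, knnRank xs x' i < k n → (s i).2 = false := by
          intro i hi
          have hdi : dist (xs i) x' ≤ r := dist_le_of_knnRank_lt hcard hi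
          by_contra htrue
          have hb : (s i).2 = true := by simpa using htrue
          have hmem := hs2 i
          rw [hGhat] at hmem
          rcases hmem with h | h
          · rw [Set.mem_prod] at h
            have hzP : (s i).1 ∈ Pstar := h.1
            have hfar := hKP (s i).1 hzP x hxTm
            have hd2 : dist (xs i) x ≤ dist (xs i) x' + dist x' x := dist_triangle _ _ _
            have : dist (xs i) x = dist (s i).1 x := rfl
            linarith
          · rw [Set.mem_prod] at h
            simp [hb] at h
        exact knnClassify_eq hn0 (hkpos n) s x' false hlab
    have hWc : D Wᶜ ≤ ENNReal.ofReal ε := by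
      have hsub : Wᶜ ⊆ ⋃ c ∈ (C \ heavy : Finset X), Ac c := by
        rintro ⟨x, y⟩ hx
        rw [Set.mem_compl_iff, hW] at hx
        have hcov := ht0cov (Set.mem_univ x)
        rw [Set.mem_iUnion₂] at hcov
        obtain ⟨c, hc, hball⟩ := hcov
        have hcC : c ∈ C := by rw [hC]; exact ht0fin.mem_toFinset.mpr hc
        have hcnh : c ∉ heavy := by
          intro hch
          exact hx (Set.mem_biUnion hch hball)
        refine Set.mem_biUnion (Finset.mem_sdiff.mpr ⟨hcC, hcnh⟩) ?_
        rw [hAc]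
        exact hball
      calc D Wᶜ ≤ D (⋃ c ∈ (C \ heavy : Finset X), Ac c) := measure_mono hsub
        _ ≤ ∑ c ∈ (C \ heavy : Finset X), D (Ac c) := measure_biUnion_finset_le _ _
        _ ≤ ∑ _c ∈ (C \ heavy : Finset X), ENNReal.ofReal η := by
            refine Finset.sum_le_sum fun c hc => ?_
            have hcmem := Finset.mem_sdiff.mp hc
            have : ¬ (ENNReal.ofReal η ≤ D (Ac c)) := by
              intro hle
              exact hcmem.2 (by rw [hheavy]; exact Finset.mem_filter.mpr ⟨hcmem.1, hle⟩)
            exact (lt_of_not_ge this).le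
        _ = ((C \ heavy : Finset X).card : ℝ≥0∞) * ENNReal.ofReal η := by
            rw [Finset.sum_const, nsmul_eq_mul]
        _ ≤ ENNReal.ofReal ε := by
            rw [← ENNReal.ofReal_natCast, ← ENNReal.ofReal_mul (by positivity)]
            apply ENNReal.ofReal_le_ofReal
            have hcard2 : (((C \ heavy : Finset X).card : ℕ) : ℝ) ≤ (L:ℝ) := by
              have h := Finset.card_le_card (Finset.sdiff_subset (s := C) (t := heavy))
              rw [hL]
              exact_mod_cast h
            have hLη : ((L:ℝ)+1) * η = ε := by rw [hη]; field_simp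
            nlinarith [hηpos.le]
    have hDW : ENNReal.ofReal (1 - ε) ≤ D W := by
      have hcompl : D W + D Wᶜ = 1 := (measure_add_measure_compl hWm).trans measure_univ
      have h1 : (1:ℝ≥0∞) ≤ D W + ENNReal.ofReal ε :=
        le_trans hcompl.ge (add_le_add le_rfl hWc)
      have h2 : ENNReal.ofReal (1-ε) + ENNReal.ofReal ε = 1 := by
        rw [← ENNReal.ofReal_add (by linarith) hε0.le]
        norm_num
      have h3 : ENNReal.ofReal (1-ε) = 1 - ENNReal.ofReal ε :=
        ENNReal.eq_sub_of_add_eq ENNReal.ofReal_ne_top h2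
      exact le_trans h3.le (tsub_le_iff_right.mpr h1)
    have hmain : ENNReal.ofReal (1 - ε) ≤ D {p | Astute (knnClassify (k n) s) (r - γ) p} :=
      calc ENNReal.ofReal (1-ε) ≤ D W := hDW
        _ ≤ D (G ∩ W) := measure_le_inter D hTfull hWm
        _ ≤ D {p | Astute (knnClassify (k n) s) (r-γ) p} := measure_mono hGW
    have h2 : 1 - ε ≤ astuteness D (knnClassify (k n) s) (r-γ) := by
      have h3 := ENNReal.toReal_mono (measure_ne_top D _) hmain
      rw [ENNReal.toReal_ofReal (by linarith)] at h3
      exact h3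
    linarith
  have hmono := measure_mono (μ := samples D n) hdet
  have hfin : ENNReal.ofReal (1-δ) ≤ samples D n
      {s : Fin n → X × Bool |
        optAstuteness D r - ε ≤ astuteness D (knnClassify (k n) s) (r - γ)} :=
    le_trans hEvlb hmono
  have hne : samples D n {s : Fin n → X × Bool |
      optAstuteness D r - ε ≤ astuteness D (knnClassify (k n) s) (r - γ)} ≠ ⊤ :=
    measure_ne_top _ _
  have hfin2 := ENNReal.toReal_mono hne hfin
  rwa [ENNReal.toReal_ofReal (by linarith)] at hfin2


end RobustNP
end
end

section
/- Let X be a totally bounded and complete metric space, let M be any classification algorithm over X × {−1,+1} (a map from finite labeled samples to classifiers X → {−1,+1}), let r > 0, and let D be a distribution over X × {−1,+1}. Then for any ε, δ ∈ (0,1) and any γ ∈ (0, r/2), there exists N such that for all n ≥ N, with probability at least 1−δ over S ~ D^n: A_{r−γ}(M(S), D) ≥ A_r(M(S), D_S) − ε, where D_S denotes the uniform distribution over the sample S. -/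
open MeasureTheory Metric Filter Finset
open scoped Classical ENNReal

noncomputable section

namespace RobustNP

variable {X : Type*} [MetricSpace X] [MeasurableSpace X]

section Helpers
open ProbabilityTheory

variable {Y : Type*} [MeasurableSpace Y] (D : Measure Y) [IsProbabilityMeasure D]

lemma pi_eval_preimage_s9 {n : ℕ} (i : Fin n) (A : Set Y) :
    (Measure.pi fun _ : Fin n => D) {s | s i ∈ A} = D A := by
  have hset : {s : Fin n → Y | s i ∈ A} =
      Set.pi Set.univ (fun k => if k = i then A else Set.univ) := by
    ext s
    simp only [Set.mem_setOf_eq, Set.mem_pi, Set.mem_univ, forall_true_left]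
    constructor
    · intro h k; by_cases hk : k = i <;> simp [hk, h]
    · intro h; have := h i; simpa using this
  rw [hset, Measure.pi_pi]
  rw [Finset.prod_eq_single i (fun b _ hb => by simp [hb]) (by simp)]
  simp

lemma indep_eval {n : ℕ} {i j : Fin n} (hij : i ≠ j) :
    IndepFun (fun s : Fin n → Y => s i) (fun s : Fin n → Y => s j)
      (Measure.pi fun _ : Fin n => D) := by
  rw [indepFun_iff_measure_inter_preimage_eq_mul]
  intro A B _ _
  have hset : ((fun s : Fin n → Y => s i) ⁻¹' A) ∩ ((fun s : Fin n → Y => s j) ⁻¹' B) =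
      Set.pi Set.univ (fun k => if k = i then A else if k = j then B else Set.univ) := by
    ext s
    simp only [Set.mem_inter_iff, Set.mem_preimage, Set.mem_pi, Set.mem_univ, forall_true_left]
    constructor
    · rintro ⟨h1, h2⟩ k
      by_cases hk : k = i
      · simp [hk, h1]
      · by_cases hk' : k = j <;> simp [hk, hk', Ne.symm hij, h2]
    · intro h
      refine ⟨by simpa using h i, ?_⟩
      have := h j
      simpa [hij.symm] using this
  rw [hset, Measure.pi_pi]
  have hprod : ∀ k : Fin n, D (if k = i then A else if k = j then B else Set.univ)
      = if k = i then D A else if k = j then D B else 1 := by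
    intro k
    by_cases hk : k = i
    · simp [hk]
    · by_cases hk' : k = j <;> simp [hk, hk', Ne.symm hij]
  simp only [hprod]
  rw [← Finset.prod_subset (Finset.subset_univ ({i, j} : Finset (Fin n)))
      (fun k _ hk => by simp only [mem_insert, mem_singleton, not_or] at hk; simp [hk.1, hk.2]),
    Finset.prod_pair hij]
  rw [show ((fun s : Fin n → Y => s i) ⁻¹' A) = {s : Fin n → Y | s i ∈ A} from rfl,
    show ((fun s : Fin n → Y => s j) ⁻¹' B) = {s : Fin n → Y | s j ∈ B} from rfl,
    pi_eval_preimage_s9 D i A, pi_eval_preimage_s9 D j B]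
  simp [hij, Ne.symm hij]


/-- number of sample coordinates falling in `E`, as a real number -/
def cnt (E : Set Y) {n : ℕ} (smp : Fin n → Y) : ℝ :=
  ∑ i, Set.indicator E (fun _ => (1 : ℝ)) (smp i)

omit [MeasurableSpace Y] in
lemma cnt_eq_card (E : Set Y) {n : ℕ} (smp : Fin n → Y)
    {inst : DecidablePred fun i : Fin n => smp i ∈ E} :
    cnt E smp = (((@Finset.filter _ _ inst univ).card : ℕ) : ℝ) := by
  rw [cnt, Finset.card_filter]
  push_cast
  refine Finset.sum_congr rfl fun i _ => ?_
  by_cases h : smp i ∈ E <;> simp [Set.indicator, h]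

lemma concentration {E : Set Y} (hE : MeasurableSet E) {n : ℕ} (hn : 0 < n)
    {t : ℝ} (ht : 0 < t) :
    (Measure.pi fun _ : Fin n => D)
      {smp | (D E).toReal + t ≤ cnt E smp / n} ≤ ENNReal.ofReal (1 / (n * t ^ 2)) := by
  set μ := (Measure.pi fun _ : Fin n => D) with hμ
  haveI : IsProbabilityMeasure μ := by rw [hμ]; infer_instance
  set g : Y → ℝ := Set.indicator E (fun _ => (1 : ℝ)) with hg
  have hgmeas : Measurable g := (measurable_const.indicator hE)
  set Xv : Fin n → (Fin n → Y) → ℝ := fun i smp => g (smp i) with hXv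
  have hmeas : ∀ i, Measurable (Xv i) := fun i => hgmeas.comp (measurable_pi_apply i)
  have hbd : ∀ i, ∀ smp : Fin n → Y, ‖Xv i smp‖ ≤ 1 := by
    intro i smp
    by_cases h : smp i ∈ E <;> simp [hXv, hg, Set.indicator, h]
  have hmem : ∀ i, MemLp (Xv i) 2 μ := fun i =>
    MemLp.of_bound (hmeas i).aestronglyMeasurable 1 (ae_of_all _ (hbd i))
  set q : ℝ := (D E).toReal with hq
  have hq01 : q ≤ 1 := by
    rw [hq]
    calc (D E).toReal ≤ (D Set.univ).toReal :=
          ENNReal.toReal_mono (measure_ne_top D _) (measure_mono (Set.subset_univ E))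
      _ = 1 := by simp
  have hXeq : ∀ i, Xv i = Set.indicator {smp : Fin n → Y | smp i ∈ E} (fun _ => (1 : ℝ)) := by
    intro i
    funext smp
    by_cases h : smp i ∈ E <;> simp [hXv, hg, Set.indicator, h]
  have hint : ∀ i, μ[Xv i] = q := by
    intro i
    rw [hXeq i, MeasureTheory.integral_indicator_const (1 : ℝ)
      (show MeasurableSet {smp : Fin n → Y | smp i ∈ E} from measurable_pi_apply i hE),
      hμ, measureReal_def, pi_eval_preimage_s9 D i E]
    simp [hq]
  have hsq : ∀ i, (Xv i) ^ 2 = Xv i := by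
    intro i
    funext smp
    by_cases h : smp i ∈ E <;> simp [hXv, hg, Set.indicator, h]
  have hvar : ∀ i, variance (Xv i) μ ≤ 1 := by
    intro i
    rw [variance_eq_sub (hmem i), hsq i, hint i]
    nlinarith [ (integral_nonneg (fun smp => by
      by_cases h : smp i ∈ E <;> simp [hXv, hg, Set.indicator, h] : ∀ smp, 0 ≤ Xv i smp) : (0:ℝ) ≤ μ[Xv i]) ]
  have hindep : Set.Pairwise (↑(univ : Finset (Fin n)))
      (fun i j => IndepFun (Xv i) (Xv j) μ) := by
    intro i _ j _ hij
    exact (indep_eval D hij).comp hgmeas hgmeas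
  set Nf : (Fin n → Y) → ℝ := ∑ i, Xv i with hNf
  have hNmem : MemLp Nf 2 μ := memLp_finset_sum' _ (fun i _ => hmem i)
  have hNvar : variance Nf μ ≤ n := by
    rw [hNf, IndepFun.variance_sum (fun i _ => hmem i) hindep]
    calc ∑ i : Fin n, variance (Xv i) μ ≤ ∑ i : Fin n, (1 : ℝ) :=
          Finset.sum_le_sum fun i _ => hvar i
      _ = n := by simp
  have hNint : μ[Nf] = n * q := by
    rw [hNf, sum_fn, integral_finset_sum _ (fun i _ => (hmem i).integrable one_le_two)]
    simp [hint, mul_comm]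
  have hnpos : (0 : ℝ) < n := Nat.cast_pos.mpr hn
  have hc : (0 : ℝ) < n * t := by positivity
  have hcheb := meas_ge_le_variance_div_sq (μ := μ) hNmem hc
  have hsub : {smp : Fin n → Y | (D E).toReal + t ≤ cnt E smp / n}
      ⊆ {smp | n * t ≤ |Nf smp - μ[Nf]|} := by
    intro smp hsmp
    simp only [Set.mem_setOf_eq] at hsmp ⊢
    have hcnt : cnt E smp = Nf smp := by
      rw [cnt, hNf]; simp [hXv, hg]
    rw [hcnt] at hsmp
    have h1 : (q + t) * n ≤ Nf smp := by
      rw [← le_div_iff₀ hnpos]; exact hsmp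
    rw [hNint]
    have h2 : n * t ≤ Nf smp - n * q := by nlinarith
    exact h2.trans (le_abs_self _)
  calc μ {smp : Fin n → Y | (D E).toReal + t ≤ cnt E smp / n}
      ≤ μ {smp | n * t ≤ |Nf smp - μ[Nf]|} := measure_mono hsub
    _ ≤ ENNReal.ofReal (variance Nf μ / (n * t) ^ 2) := hcheb
    _ ≤ ENNReal.ofReal (1 / (n * t ^ 2)) := by
        apply ENNReal.ofReal_le_ofReal
        rw [div_le_div_iff₀ (by positivity) (by positivity)]
        have : (n : ℝ) * (n * t ^ 2) = (n * t) ^ 2 := by ring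
        nlinarith [hNvar, sq_nonneg ((n:ℝ) * t)]



lemma exists_partition {X : Type*} [MetricSpace X] [MeasurableSpace X] [BorelSpace X]
    (hX : TotallyBounded (Set.univ : Set X)) [Nonempty X] {η : ℝ} (hη : 0 < η) :
    ∃ (m : ℕ), 0 < m ∧ ∃ C : Fin m → Set X,
      (∀ j, MeasurableSet (C j)) ∧
      (∀ j k, j ≠ k → Disjoint (C j) (C k)) ∧
      (∀ x : X, ∃ j, x ∈ C j) ∧
      (∀ j, ∀ x ∈ C j, ∀ y ∈ C j, dist x y < 2 * η) := by
  obtain ⟨net, hnetfin, hnetcov⟩ := (Metric.totallyBounded_iff.mp hX) η hη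
  set s : Finset X := hnetfin.toFinset with hs
  set m := s.card with hm
  set z : Fin m → X := fun i => (s.equivFin.symm i : X) with hz
  have hcov : ∀ x : X, ∃ i : Fin m, x ∈ ball (z i) η := by
    intro x
    obtain ⟨y, hy, hxy⟩ := Set.mem_iUnion₂.mp (hnetcov (Set.mem_univ x))
    have hy' : y ∈ s := hnetfin.mem_toFinset.mpr hy
    refine ⟨s.equivFin ⟨y, hy'⟩, ?_⟩
    simpa [hz] using hxy
  have hmpos : 0 < m := by
    obtain ⟨i0, -⟩ := hcov (Classical.arbitrary X)
    exact i0.pos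
  refine ⟨m, hmpos, fun j => ball (z j) η \ ⋃ (k : Fin m) (_ : k < j), ball (z k) η,
    fun j => measurableSet_ball.diff
      (MeasurableSet.iUnion fun k => MeasurableSet.iUnion fun _ => measurableSet_ball),
    ?_, ?_, ?_⟩
  · intro j k hjk
    rcases lt_or_gt_of_ne hjk with h | h
    · rw [Set.disjoint_left]
      intro x hxj hxk
      exact hxk.2 (Set.mem_iUnion₂.mpr ⟨j, h, hxj.1⟩)
    · rw [Set.disjoint_left]
      intro x hxj hxk
      exact hxj.2 (Set.mem_iUnion₂.mpr ⟨k, h, hxk.1⟩)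
  · intro x
    have hne' : (univ.filter fun j : Fin m => x ∈ ball (z j) η).Nonempty := by
      obtain ⟨i, hi⟩ := hcov x
      exact ⟨i, mem_filter.mpr ⟨mem_univ _, hi⟩⟩
    refine ⟨Finset.min' _ hne', ?_, ?_⟩
    · exact (mem_filter.mp (Finset.min'_mem _ hne')).2
    · intro hx
      obtain ⟨k, hk, hxk⟩ := Set.mem_iUnion₂.mp hx
      have hle : Finset.min' _ hne' ≤ k := Finset.min'_le _ k (mem_filter.mpr ⟨mem_univ _, hxk⟩)
      exact absurd hk (not_lt.mpr hle)
  · intro j x hx y hy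
    have hx' : dist x (z j) < η := mem_ball.mp hx.1
    have hy' : dist y (z j) < η := mem_ball.mp hy.1
    calc dist x y ≤ dist x (z j) + dist (z j) y := dist_triangle _ _ _
      _ < 2 * η := by rw [dist_comm (z j) y]; linarith


end Helpers

/-- Lemma 4 of the paper.  Let `X` be a totally bounded and complete
metric space, `M` any classification algorithm, `r > 0`, and `D` a distribution over
`X × {-1,+1}`.  For any `ε, δ ∈ (0,1)` and `γ ∈ (0, r/2)` there exists `N` such that for
`n ≥ N`, with probability at least `1 - δ` over `S ~ D^n`,
`A_{r-γ}(M(S), D) ≥ A_r(M(S), D_S) - ε`, where `D_S` is the empirical distribution of the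
sample (so `A_r(M(S), D_S)` is the fraction of sample points at which `M(S)` is astute). -/
theorem astuteness_ge_empirical
    {X : Type*} [MetricSpace X] [CompleteSpace X] [MeasurableSpace X] [BorelSpace X]
    (hX : TotallyBounded (Set.univ : Set X))
    (M : ∀ n : ℕ, (Fin n → X × Bool) → X → Bool)
    (r : ℝ) (hr : 0 < r)
    (D : Measure (X × Bool)) (hD : IsProbabilityMeasure D)
    (ε δ : ℝ) (hε : ε ∈ Set.Ioo (0 : ℝ) 1) (hδ : δ ∈ Set.Ioo (0 : ℝ) 1)
    (γ : ℝ) (hγ : γ ∈ Set.Ioo (0 : ℝ) (r / 2)) :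
    ∃ N : ℕ, ∀ n ≥ N,
      1 - δ ≤ (samples D n {smp : Fin n → X × Bool |
        ((univ.filter fun i : Fin n => Astute (M n smp) r (smp i)).card : ℝ) / n - ε
          ≤ astuteness D (M n smp) (r - γ)}).toReal := by
  haveI := hD
  rcases isEmpty_or_nonempty X with hempty | hne
  · exfalso
    have h1 : (Set.univ : Set (X × Bool)) = ∅ := Set.univ_eq_empty_iff.mpr inferInstance
    have h2 := measure_univ (μ := D)
    rw [h1, measure_empty] at h2
    exact zero_ne_one h2
  have hγ2 : 0 < γ / 2 := by linarith [hγ.1]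
  obtain ⟨m, hmpos, C, hCmeas, hCdisj, hCcov, hCdiam⟩ := exists_partition hX hγ2
  have hCdiam' : ∀ j, ∀ x ∈ C j, ∀ y ∈ C j, dist x y < γ := by
    intro j x hx y hy
    have := hCdiam j x hx y hy
    linarith
  -- labeled cells
  set Eset : Fin m × Bool → Set (X × Bool) :=
    fun κ => (C κ.1) ×ˢ ({κ.2} : Set Bool) with hEset
  have hEmeas : ∀ κ, MeasurableSet (Eset κ) := fun κ =>
    (hCmeas κ.1).prod (measurableSet_singleton _)
  have hmemE : ∀ (κ) (p : X × Bool), p ∈ Eset κ ↔ p.1 ∈ C κ.1 ∧ p.2 = κ.2 := by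
    intro κ p
    simp only [hEset, Set.mem_prod, Set.mem_singleton_iff]
  have hEdisj : ∀ κ κ', κ ≠ κ' → Disjoint (Eset κ) (Eset κ') := by
    intro κ κ' hκ
    rw [Set.disjoint_left]
    intro p hp hp'
    rw [hmemE] at hp hp'
    by_cases h2 : κ.2 = κ'.2
    · have h1 : κ.1 ≠ κ'.1 := fun h1 => hκ (Prod.ext h1 h2)
      exact Set.disjoint_left.mp (hCdisj _ _ h1) hp.1 hp'.1
    · exact h2 (hp.2.symm.trans hp'.2)
  -- parameters
  set t : ℝ := ε / (2 * m) with htd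
  have ht : 0 < t := div_pos hε.1 (by positivity)
  refine ⟨max 1 ⌈(2 * m) / (δ * t ^ 2)⌉₊, fun n hn => ?_⟩
  have hn1 : 1 ≤ n := le_trans (le_max_left _ _) hn
  have hnpos : (0 : ℝ) < n := by exact_mod_cast hn1
  have hb : (2 * m : ℝ) / (δ * t ^ 2) ≤ n := by
    calc (2 * m : ℝ) / (δ * t ^ 2) ≤ ⌈(2 * m) / (δ * t ^ 2)⌉₊ := Nat.le_ceil _
      _ ≤ n := by exact_mod_cast le_trans (le_max_right _ _) hn
  have hkey : (m * 2 : ℝ) * (1 / (n * t ^ 2)) ≤ δ := by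
    have hd1 : (0:ℝ) < δ * t ^ 2 := mul_pos hδ.1 (pow_pos ht 2)
    have hd2 : (0:ℝ) < (n:ℝ) * t ^ 2 := mul_pos hnpos (pow_pos ht 2)
    rw [div_le_iff₀ hd1] at hb
    rw [mul_one_div, div_le_iff₀ hd2]
    nlinarith
  set μ := samples D n with hμdef
  haveI : IsProbabilityMeasure μ := by
    rw [hμdef, samples]; infer_instance
  have hμpi : μ = Measure.pi fun _ : Fin n => D := rfl
  -- bad events
  set Bad : Fin m × Bool → Set (Fin n → X × Bool) :=
    fun κ => {smp | (D (Eset κ)).toReal + t ≤ cnt (Eset κ) smp / n} with hBad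
  have hBadmeas : ∀ κ, MeasurableSet (Bad κ) := by
    intro κ
    have hcntm : Measurable fun smp : Fin n → X × Bool => cnt (Eset κ) smp :=
      Finset.measurable_sum _ fun i _ =>
        (measurable_const.indicator (hEmeas κ)).comp (measurable_pi_apply i)
    exact measurableSet_le measurable_const (hcntm.div_const _)
  set U : Set (Fin n → X × Bool) := ⋃ κ, Bad κ with hU
  have hUmeas : MeasurableSet U := MeasurableSet.iUnion hBadmeas
  have hUbound : μ U ≤ ENNReal.ofReal δ := by
    calc μ U ≤ ∑' κ, μ (Bad κ) := measure_iUnion_le _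
      _ = ∑ κ : Fin m × Bool, μ (Bad κ) := tsum_fintype _
      _ ≤ ∑ _κ : Fin m × Bool, ENNReal.ofReal (1 / (n * t ^ 2)) :=
          Finset.sum_le_sum fun κ _ => by
            rw [hμpi]
            exact concentration D (hEmeas κ) (by omega) ht
      _ = (m * 2 : ℕ) * ENNReal.ofReal (1 / (n * t ^ 2)) := by
          simp [Finset.sum_const, card_univ, nsmul_eq_mul]
      _ ≤ ENNReal.ofReal δ := by
          rw [show ((m * 2 : ℕ) : ℝ≥0∞) = ENNReal.ofReal ((m * 2 : ℕ) : ℝ) from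
            (ENNReal.ofReal_natCast _).symm, ← ENNReal.ofReal_mul (by positivity)]
          apply ENNReal.ofReal_le_ofReal
          push_cast
          exact hkey
  -- good event is contained in the target event
  have hGsub : Uᶜ ⊆ {smp : Fin n → X × Bool |
      ((univ.filter fun i : Fin n => Astute (M n smp) r (smp i)).card : ℝ) / n - ε
        ≤ astuteness D (M n smp) (r - γ)} := by
    intro smp hsmp
    set f := M n smp with hf
    have hgood : ∀ κ, cnt (Eset κ) smp / n ≤ (D (Eset κ)).toReal + t := by
      intro κ
      have := Set.notMem_of_mem_compl hsmp
      rw [hU, Set.mem_iUnion] at this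
      push_neg at this
      exact le_of_not_ge (this κ)
    set A : Finset (Fin m × Bool) :=
      univ.filter (fun κ => ∃ i, smp i ∈ Eset κ ∧ Astute f r (smp i)) with hA
    have h1 : ((univ.filter fun i : Fin n => Astute f r (smp i)).card : ℝ) ≤
        ∑ κ ∈ A, cnt (Eset κ) smp := by
      have hsubB : univ.filter (fun i => Astute f r (smp i)) ⊆
          A.biUnion (fun κ => univ.filter fun i => smp i ∈ Eset κ) := by
        intro i hi
        rw [mem_filter] at hi
        obtain ⟨j, hj⟩ := hCcov (smp i).1
        have hiE : smp i ∈ Eset (j, (smp i).2) := (hmemE _ _).mpr ⟨hj, rfl⟩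
        refine Finset.mem_biUnion.mpr ⟨(j, (smp i).2), ?_, by simp [hiE]⟩
        rw [hA, mem_filter]
        exact ⟨mem_univ _, i, hiE, hi.2⟩
      have hnat : (univ.filter fun i : Fin n => Astute f r (smp i)).card ≤
          ∑ κ ∈ A, (univ.filter fun i => smp i ∈ Eset κ).card :=
        (Finset.card_le_card hsubB).trans Finset.card_biUnion_le
      calc ((univ.filter fun i : Fin n => Astute f r (smp i)).card : ℝ)
          ≤ ((∑ κ ∈ A, (univ.filter fun i => smp i ∈ Eset κ).card : ℕ) : ℝ) :=
            Nat.cast_le.mpr hnat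
        _ = ∑ κ ∈ A, cnt (Eset κ) smp := by
            rw [Nat.cast_sum]
            exact Finset.sum_congr rfl fun κ _ => (cnt_eq_card _ _).symm
    have h3 : (A.card : ℝ) * t ≤ ε := by
      have hcard : (A.card : ℝ) ≤ (m * 2 : ℝ) := by
        have := Finset.card_le_card (Finset.subset_univ A)
        rw [card_univ] at this
        exact_mod_cast by simpa using this
      have : (m * 2 : ℝ) * t = ε := by
        rw [htd]
        field_simp
      nlinarith
    have h4 : ∑ κ ∈ A, (D (Eset κ)).toReal ≤ astuteness D f (r - γ) := by
      have hAsub : ∀ κ ∈ A, Eset κ ⊆ {p | Astute f (r - γ) p} := by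
        intro κ hκ
        rw [hA, mem_filter] at hκ
        obtain ⟨i, hiE, hiast⟩ := hκ.2
        rw [hmemE] at hiE
        intro p hp
        rw [hmemE] at hp
        have hdist : dist p.1 (smp i).1 < γ := hCdiam' κ.1 _ hp.1 _ hiE.1
        show Astute f (r - γ) p
        intro x' hx'
        rw [mem_closedBall] at hx'
        have hx'' : x' ∈ closedBall (smp i).1 r := by
          rw [mem_closedBall]
          calc dist x' (smp i).1 ≤ dist x' p.1 + dist p.1 (smp i).1 := dist_triangle _ _ _
            _ ≤ r := by linarith
        rw [hp.2, ← hiE.2]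
        exact hiast x' hx''
      have hdisjA : Set.PairwiseDisjoint (↑A) Eset := fun κ _ κ' _ h => hEdisj κ κ' h
      calc ∑ κ ∈ A, (D (Eset κ)).toReal = (∑ κ ∈ A, D (Eset κ)).toReal :=
            (ENNReal.toReal_sum fun κ _ => measure_ne_top D _).symm
        _ = (D (⋃ κ ∈ A, Eset κ)).toReal := by
            rw [measure_biUnion_finset hdisjA fun κ _ => hEmeas κ]
        _ ≤ (D {p | Astute f (r - γ) p}).toReal :=
            ENNReal.toReal_mono (measure_ne_top D _)
              (measure_mono (Set.iUnion₂_subset hAsub))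
        _ = astuteness D f (r - γ) := rfl
    -- combine
    show ((univ.filter fun i : Fin n => Astute f r (smp i)).card : ℝ) / n - ε
        ≤ astuteness D f (r - γ)
    have e1 : ((univ.filter fun i : Fin n => Astute f r (smp i)).card : ℝ) / n ≤
        ∑ κ ∈ A, cnt (Eset κ) smp / n := by
      rw [← Finset.sum_div]
      exact div_le_div_of_nonneg_right h1 hnpos.le
    have e2 : ∑ κ ∈ A, cnt (Eset κ) smp / n ≤
        ∑ κ ∈ A, ((D (Eset κ)).toReal + t) :=
      Finset.sum_le_sum fun κ _ => hgood κ
    have e3 : ∑ κ ∈ A, ((D (Eset κ)).toReal + t) =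
        ∑ κ ∈ A, (D (Eset κ)).toReal + A.card * t := by
      rw [Finset.sum_add_distrib, Finset.sum_const, nsmul_eq_mul]
    linarith
  -- wrap up
  have hfinal : 1 - δ ≤ (μ Uᶜ).toReal := by
    rw [prob_compl_eq_one_sub hUmeas,
      ENNReal.toReal_sub_of_le prob_le_one ENNReal.one_ne_top]
    have := ENNReal.toReal_le_of_le_ofReal hδ.1.le hUbound
    simp only [ENNReal.toReal_one]
    linarith
  calc (1 : ℝ) - δ ≤ (μ Uᶜ).toReal := hfinal
    _ ≤ _ := ENNReal.toReal_mono (measure_ne_top μ _) (measure_mono hGsub)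


end RobustNP
end
end

section
/- Let X be a metric space and let D be an r-separated distribution over X × {−1,+1}. Then the optimal astuteness at radius r equals one: A_r^*(D) = sup_f A_r(f,D) = 1; indeed, the classifier assigning +1 to all points within distance r of T^+ and −1 elsewhere is astute with radius r almost surely on D. -/
open MeasureTheory Metric Filter Finset
open scoped Classical ENNReal

noncomputable section

namespace RobustNP

variable {X : Type*} [MetricSpace X] [MeasurableSpace X]

/-- If `D` is an `r`-separated distribution over `X × {-1,+1}`
(witnessed by `T⁺ = Tp` and `T⁻ = Tm`), then the optimal astuteness at radius `r` is one:
`A_r^*(D) = 1`; indeed the classifier assigning `+1` to all points within distance `r` of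
`T⁺` and `-1` elsewhere is astute with radius `r` almost surely on `D`. -/
theorem optAstuteness_eq_one_of_rSeparated
    {X : Type*} [MetricSpace X] [MeasurableSpace X] [BorelSpace X]
    (D : Measure (X × Bool)) (hD : IsProbabilityMeasure D) (r : ℝ)
    (Tp Tm : Set X)
    (hsupp : D {p : X × Bool | p.1 ∈ (if p.2 then Tp else Tm)} = 1)
    (hsep : ∀ x₁ ∈ Tp, ∀ x₂ ∈ Tm, 2 * r < dist x₁ x₂) :
    optAstuteness D r = 1 ∧
    D {p : X × Bool |
        Astute (fun x => if ∃ t ∈ Tp, dist x t ≤ r then true else false) r p} = 1 := by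
  set f : X → Bool := fun x => if ∃ t ∈ Tp, dist x t ≤ r then true else false with hf
  have hsub : {p : X × Bool | p.1 ∈ (if p.2 then Tp else Tm)} ⊆ {p : X × Bool | Astute f r p} := by
    rintro ⟨x, y⟩ hp
    intro x' hx'
    simp only [Set.mem_setOf_eq] at hp
    cases y with
    | true =>
      simp only [if_pos rfl] at hp ⊢
      simp only [hf]
      rw [if_pos]
      exact ⟨x, hp, by simpa [dist_comm] using mem_closedBall.mp hx'⟩
    | false =>
      simp only [Bool.false_eq_true, if_false] at hp
      simp only [hf]
      rw [if_neg]
      rintro ⟨t, ht, hd⟩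
      have h1 : dist t x ≤ 2 * r := by
        have := mem_closedBall.mp hx'
        calc dist t x ≤ dist t x' + dist x' x := dist_triangle _ _ _
          _ ≤ r + r := by rw [dist_comm t x']; exact add_le_add hd this
          _ = 2 * r := by ring
      exact absurd h1 (not_le.mpr (hsep t ht x hp))
  have hmeas : D {p : X × Bool | Astute f r p} = 1 := by
    refine le_antisymm (le_of_le_of_eq (measure_mono (Set.subset_univ _)) (by simp)) ?_
    calc (1 : ℝ≥0∞) = D _ := hsupp.symm
      _ ≤ _ := measure_mono hsub
  refine ⟨?_, hmeas⟩
  have hle : ∀ g : X → Bool, astuteness D g r ≤ 1 := by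
    intro g
    have : D {p | Astute g r p} ≤ 1 := le_of_le_of_eq (measure_mono (Set.subset_univ _)) (by simp)
    simpa [astuteness] using ENNReal.toReal_mono (by simp) this
  have hfv : astuteness D f r = 1 := by simp [astuteness, hmeas]
  refine le_antisymm (ciSup_le hle) ?_
  calc (1:ℝ) = astuteness D f r := hfv.symm
    _ ≤ optAstuteness D r := le_ciSup ⟨1, Set.forall_mem_range.mpr hle⟩ f


end RobustNP
end
end

section
/- Let X = [−1,1] ⊂ ℝ and let D be the distribution on X × {−1,+1} with P_D[(−1,−1)] = 0.1 and P_D[(1,+1)] = 0.9. Let K(x) = exp(−min(|x|, 0.2)²) and let (h_n) be any positive sequence with lim_{n→∞} h_n = 0. Let W be the kernel classifier constructed from K and (h_n), i.e., on sample S = ((x_1,y_1),...,(x_n,y_n)) it outputs W_S(x) = +1 iff Σ_i w_i^S(x)·y_i > 0 where w_i^S(x) = K(|x−x_i|/h_n)/Σ_j K(|x−x_j|/h_n). Then W is not r-consistent with respect to D for r = 0.3: there exist ε, δ ∈ (0,1) and γ ∈ (0, 0.3) such that for every N there is n ≥ N for which, with probability greater than δ over S ~ D^n, A_{0.3−γ}(W_S,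 D) < A_{0.3}^*(D) − ε. In particular, D is 0.3-separated (so A_{0.3}^*(D) = 1), yet for all sufficiently large n, with high probability over S ~ D^n, W_S(−0.7) = +1, so W_S is not robust at −1 with radius 0.3 and hence A_{0.3}(W_S, D) ≤ 0.9. -/
open MeasureTheory Metric Filter Finset
open scoped Classical ENNReal

noncomputable section

namespace RobustNP

variable {X : Type*} [MetricSpace X] [MeasurableSpace X]

/-- The instance space of Example 3 of the paper: the interval `[-1, 1] ⊆ ℝ`. -/
abbrev X14 : Type := Set.Icc (-1 : ℝ) 1

/-- The point `-1` of `[-1,1]`. -/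
def ptNeg : X14 := ⟨-1, by norm_num⟩

/-- The point `1` of `[-1,1]`. -/
def ptPos : X14 := ⟨1, by norm_num⟩

/-- The distribution of Example 3: mass `0.1` at `(-1, -1)` and mass `0.9` at `(1, +1)`. -/
def D14 : Measure (X14 × Bool) :=
  ENNReal.ofReal 0.1 • Measure.dirac (ptNeg, false) +
    ENNReal.ofReal 0.9 • Measure.dirac (ptPos, true)

/-- The kernel of Example 3: `K(x) = exp(-(min(|x|, 0.2))²)`. -/
def K14 : ℝ → ℝ := fun x => Real.exp (-(min |x| 0.2) ^ 2)


lemma dist14 (x y : X14) : dist x y = |x.val - y.val| := by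
  rw [Subtype.dist_eq, Real.dist_eq]

lemma D14_apply (E : Set (X14 × Bool)) :
    D14 E = ENNReal.ofReal 0.1 * E.indicator 1 (ptNeg, false)
      + ENNReal.ofReal 0.9 * E.indicator 1 (ptPos, true) := by
  simp [D14, Measure.dirac_apply, Measure.add_apply, Measure.smul_apply, smul_eq_mul]

lemma D14_mem_mem {E : Set (X14 × Bool)} (h1 : (ptNeg, false) ∈ E)
    (h2 : (ptPos, true) ∈ E) : D14 E = 1 := by
  rw [D14_apply, Set.indicator_of_mem h1, Set.indicator_of_mem h2]
  simp only [Pi.one_apply, mul_one]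
  rw [← ENNReal.ofReal_add (by norm_num) (by norm_num)]
  norm_num

instance : IsProbabilityMeasure D14 :=
  ⟨D14_mem_mem (Set.mem_univ _) (Set.mem_univ _)⟩

lemma D14_not_neg {E : Set (X14 × Bool)} (h1 : (ptNeg, false) ∉ E) :
    (D14 E).toReal ≤ 0.9 := by
  rw [D14_apply, Set.indicator_of_notMem h1, mul_zero, zero_add]
  refine ENNReal.toReal_le_of_le_ofReal (by norm_num) ?_
  calc ENNReal.ofReal 0.9 * E.indicator 1 (ptPos, true)
      ≤ ENNReal.ofReal 0.9 * 1 := by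
        gcongr
        by_cases hmem : (ptPos, true) ∈ E <;> simp [hmem]
    _ = ENNReal.ofReal 0.9 := mul_one _

lemma D14_not_pos {E : Set (X14 × Bool)} (h2 : (ptPos, true) ∉ E) :
    (D14 E).toReal ≤ 0.9 := by
  rw [D14_apply, Set.indicator_of_notMem h2, mul_zero, add_zero]
  refine ENNReal.toReal_le_of_le_ofReal (by norm_num) ?_
  calc ENNReal.ofReal 0.1 * E.indicator 1 (ptNeg, false)
      ≤ ENNReal.ofReal 0.1 * 1 := by
        gcongr
        by_cases hmem : (ptNeg, false) ∈ E <;> simp [hmem]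
    _ ≤ ENNReal.ofReal 0.9 := by
        rw [mul_one]; exact ENNReal.ofReal_le_ofReal (by norm_num)

lemma K14_far {hn d : ℝ} (hp : 0 < hn) (hle : hn ≤ 1) (hd : 0.2 ≤ d) :
    K14 (d / hn) = Real.exp (-(0.2 : ℝ) ^ 2) := by
  have hd0 : (0:ℝ) ≤ d := by linarith
  have h1 : (0.2 : ℝ) ≤ d / hn := by
    rw [le_div_iff₀ hp]; nlinarith
  unfold K14
  rw [abs_of_nonneg (le_trans (by norm_num) h1), min_eq_right h1]

lemma astuteness_le_one14 (f : X14 → Bool) (r : ℝ) : astuteness D14 f r ≤ 1 := by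
  unfold astuteness
  have hle : D14 {p | Astute f r p} ≤ 1 := prob_le_one
  calc (D14 {p | Astute f r p}).toReal ≤ (1 : ℝ≥0∞).toReal :=
        ENNReal.toReal_mono ENNReal.one_ne_top hle
    _ = 1 := by simp

lemma opt14 : (1 : ℝ) ≤ optAstuteness D14 0.3 := by
  have hb : BddAbove (Set.range fun f : X14 → Bool => astuteness D14 f 0.3) :=
    ⟨1, by rintro _ ⟨f, rfl⟩; exact astuteness_le_one14 f _⟩
  have key : astuteness D14 (fun x : X14 => decide ((0:ℝ) ≤ x.val)) 0.3 = 1 := by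
    unfold astuteness
    have h1 : (ptNeg, false) ∈ {p | Astute (fun x : X14 => decide ((0:ℝ) ≤ x.val)) 0.3 p} := by
      intro x' hx'
      rw [mem_closedBall, dist14] at hx'
      have : x'.val ≤ -0.7 := by
        have := abs_le.mp hx'
        have hpv : (ptNeg : X14).val = -1 := rfl
        rw [hpv] at this
        linarith [this.2]
      simp only [decide_eq_false_iff_not]
      intro hcon
      linarith
    have h2 : (ptPos, true) ∈ {p | Astute (fun x : X14 => decide ((0:ℝ) ≤ x.val)) 0.3 p} := by
      intro x' hx'
      rw [mem_closedBall, dist14] at hx'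
      have : (0.7 : ℝ) ≤ x'.val := by
        have := abs_le.mp hx'
        have hpv : (ptPos : X14).val = 1 := rfl
        rw [hpv] at this
        linarith [this.1]
      simp only [decide_eq_true_eq]
      linarith
    rw [D14_mem_mem h1 h2]
    simp
  calc (1:ℝ) = astuteness D14 (fun x : X14 => decide ((0:ℝ) ≤ x.val)) 0.3 := key.symm
    _ ≤ optAstuteness D14 0.3 := le_ciSup hb _

lemma sample_bad {n : ℕ} {hn : ℝ} (hp : 0 < hn) (hle : hn ≤ 1)
    (s : Fin n → X14 × Bool) (hs : ∀ i, s i = (ptNeg, false) ∨ s i = (ptPos, true)) :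
    astuteness D14 (kernelClassify K14 hn s) (0.3 - 0.1) ≤ 0.9 := by
  set xq : X14 := ⟨-0.8, by norm_num⟩ with hxq
  set xp : X14 := ⟨0.8, by norm_num⟩ with hxp
  have hdq : ∀ i, (0.2 : ℝ) ≤ dist xq (s i).1 := by
    intro i
    rcases hs i with h1 | h1 <;> rw [h1, dist14] <;>
      simp only [hxq, ptNeg, ptPos] <;> norm_num [abs_of_nonneg]
  have hdp : ∀ i, (0.2 : ℝ) ≤ dist xp (s i).1 := by
    intro i
    rcases hs i with h1 | h1 <;> rw [h1, dist14] <;>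
      simp only [hxp, ptNeg, ptPos] <;> norm_num [abs_of_nonneg]
  have e1 : ∀ i, K14 (dist xq (s i).1 / hn) = Real.exp (-(0.2:ℝ)^2) :=
    fun i => K14_far hp hle (hdq i)
  have e2 : ∀ i, K14 (dist xp (s i).1 / hn) = Real.exp (-(0.2:ℝ)^2) :=
    fun i => K14_far hp hle (hdp i)
  have heq : kernelClassify K14 hn s xq = kernelClassify K14 hn s xp := by
    unfold kernelClassify
    simp only [e1, e2]
  unfold astuteness
  cases hb : kernelClassify K14 hn s xq with
  | false =>
    apply D14_not_pos
    intro hmem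
    have hball : xp ∈ closedBall ((ptPos, true) : X14 × Bool).1 (0.3 - 0.1) := by
      rw [mem_closedBall, dist14]
      have hpv : (ptPos : X14).val = 1 := rfl
      rw [hpv]
      norm_num [hxp, abs_of_nonneg, abs_of_nonpos]
    have := hmem xp hball
    rw [← heq, hb] at this
    simp at this
  | true =>
    apply D14_not_neg
    intro hmem
    have hball : xq ∈ closedBall ((ptNeg, false) : X14 × Bool).1 (0.3 - 0.1) := by
      rw [mem_closedBall, dist14]
      have hpv : (ptNeg : X14).val = -1 := rfl
      rw [hpv]
      norm_num [hxq, abs_of_nonneg, abs_of_nonpos]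
    have := hmem xq hball
    rw [hb] at this
    simp at this

/-- Example 3 of the paper.  With `X = [-1,1]`, `D = D14`,
`K = K14` and any positive bandwidth sequence `h_n → 0`, the distribution `D` is
`0.3`-separated, yet the kernel classifier built from `K` and `(h_n)` is *not*
`0.3`-consistent with respect to `D`. -/
theorem kernel_not_rConsistent_example
    (h : ℕ → ℝ) (hhpos : ∀ n, 0 < h n) (hh : Tendsto h atTop (nhds 0)) :
    RSeparated D14 0.3 ∧
    ¬ RConsistent (fun n (s : Fin n → X14 × Bool) => kernelClassify K14 (h n) s) D14 0.3 := by
  have hsep : RSeparated D14 0.3 := by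
    refine ⟨{ptPos}, {ptNeg}, ?_, ?_⟩
    · apply D14_mem_mem
      · simp
      · simp
    · intro x₁ hx₁ x₂ hx₂
      simp only [Set.mem_singleton_iff] at hx₁ hx₂
      subst hx₁; subst hx₂
      rw [dist14]
      have h1 : (ptPos : X14).val = 1 := rfl
      have h2 : (ptNeg : X14).val = -1 := rfl
      rw [h1, h2]
      norm_num
  refine ⟨hsep, ?_⟩
  intro hcon
  obtain ⟨N, hN⟩ := hcon 0.05 (by norm_num) 0.5 (by norm_num) 0.1 (by norm_num)
  have hev : ∀ᶠ n in atTop, h n < 1 := hh.eventually (gt_mem_nhds (by norm_num : (0:ℝ) < 1))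
  obtain ⟨M, hM⟩ := eventually_atTop.mp hev
  set n : ℕ := max N M with hn
  have hle1 : h n ≤ 1 := (hM n (le_max_right _ _)).le
  have hspec := hN n (le_max_left _ _)
  set A : Set (X14 × Bool) := {(ptNeg, false), (ptPos, true)} with hA
  have hAmeas : MeasurableSet A :=
    (measurableSet_singleton _).insert _
  have hGeq : {s : Fin n → X14 × Bool | ∀ i, s i ∈ A} = Set.pi Set.univ (fun _ => A) := by
    ext s; simp [Set.mem_pi]
  have hGmeas : MeasurableSet {s : Fin n → X14 × Bool | ∀ i, s i ∈ A} := by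
    rw [hGeq]; exact MeasurableSet.univ_pi fun _ => hAmeas
  have hDA : D14 A = 1 := D14_mem_mem (by simp [hA]) (by simp [hA])
  have hG1 : samples D14 n {s : Fin n → X14 × Bool | ∀ i, s i ∈ A} = 1 := by
    rw [hGeq]
    show Measure.pi (fun _ => D14) _ = 1
    rw [Measure.pi_pi]
    simp [hDA]
  haveI : IsProbabilityMeasure (samples D14 n) := by
    unfold samples; infer_instance
  have hcompl : samples D14 n {s : Fin n → X14 × Bool | ∀ i, s i ∈ A}ᶜ = 0 :=
    (prob_compl_eq_zero_iff hGmeas).mpr hG1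
  have hsub : {s : Fin n → X14 × Bool |
        optAstuteness D14 0.3 - 0.05 ≤ astuteness D14 (kernelClassify K14 (h n) s) (0.3 - 0.1)}
      ⊆ {s : Fin n → X14 × Bool | ∀ i, s i ∈ A}ᶜ := by
    intro s hsmem hsA
    have hsA' : ∀ i, s i = (ptNeg, false) ∨ s i = (ptPos, true) := by
      intro i
      have := hsA i
      simpa [hA] using this
    have hbad := sample_bad (hhpos n) hle1 s hsA'
    have hopt := opt14
    simp only [Set.mem_setOf_eq] at hsmem
    linarith
  have hzero : samples D14 n {s : Fin n → X14 × Bool |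
      optAstuteness D14 0.3 - 0.05 ≤ astuteness D14 (kernelClassify K14 (h n) s) (0.3 - 0.1)} = 0 :=
    measure_mono_null hsub hcompl
  rw [hzero] at hspec
  norm_num at hspec


end RobustNP
end
end
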